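/- In the same single-draw setting with |α_i| = 1, for any constant weights ω_{iκ} ≥ 0 with Σ_{i ∈ β_κ} ω_{iκ} = 1, conditional on the event that motif κ is observed (i.e., the drawn unit lies in β_κ), the estimator z_i/p_i = ω_{iκ} y_κ / p_i has conditional expectation y_κ / p_{(κ)}; its conditional variance is zero if and only if ω_{iκ}/p_i is constant over i ∈ β_κ (equivalently ω_{iκ} = p_i/p_{(κ)}), assuming y_κ ≠ 0 and |β_κ| ≥ 2. -/

import Mathlib

open Finset
open scoped Classical BigOperators

/-- Single-draw setting: conditional on observing motif `κ`, the HH-type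
estimator has conditional expectation `y_κ / p_{(κ)}`, and its conditional
variance is zero iff the weights are `ω_{iκ} = p_i / p_{(κ)}`. -/
theorem stmt_13
    {F : Type*} [Fintype F]
    (β : Finset F) (hβcard : 2 ≤ β.card)
    (p : F → ℝ) (hp : ∀ i, 0 < p i) (hp1 : ∑ i, p i = 1)
    (pκ : ℝ) (hpκ : pκ = ∑ i ∈ β, p i)
    (w : F → ℝ) (hw0 : ∀ i ∈ β, 0 ≤ w i) (hw1 : ∑ i ∈ β, w i = 1)
    (yκ : ℝ) (hy : yκ ≠ 0) :
    (∑ i ∈ β, (p i / pκ) * (w i * yκ / p i) = yκ / pκ)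
    ∧ ((∑ i ∈ β, (p i / pκ) * (w i * yκ / p i - yκ / pκ) ^ 2 = 0)
        ↔ ∀ i ∈ β, w i = p i / pκ) := by
  have hβne : β.Nonempty := Finset.card_pos.mp (by omega)
  have hpκpos : 0 < pκ := by
    rw [hpκ]; exact Finset.sum_pos (fun i _ => hp i) hβne
  have hpκne : pκ ≠ 0 := ne_of_gt hpκpos
  have hmean : ∑ i ∈ β, (p i / pκ) * (w i * yκ / p i) = yκ / pκ := by
    have : ∀ i ∈ β, (p i / pκ) * (w i * yκ / p i) = w i * (yκ / pκ) := by
      intro i _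
      field_simp [(hp i).ne']
    rw [Finset.sum_congr rfl this, ← Finset.sum_mul, hw1, one_mul]
  refine ⟨hmean, ?_⟩
  constructor
  · intro hsum i hi
    have hnn : ∀ j ∈ β, 0 ≤ (p j / pκ) * (w j * yκ / p j - yκ / pκ) ^ 2 := by
      intro j _
      exact mul_nonneg (div_nonneg (hp j).le hpκpos.le) (sq_nonneg _)
    have h0 := (Finset.sum_eq_zero_iff_of_nonneg hnn).mp hsum i hi
    have hpi := hp i
    have hfac : (w i * yκ / p i - yκ / pκ) ^ 2 = 0 := by
      rcases mul_eq_zero.mp h0 with h | h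
      · exact absurd h (by positivity)
      · exact h
    have h1 : w i * yκ / p i = yκ / pκ := by
      have := pow_eq_zero_iff (n := 2) (by norm_num) |>.mp hfac
      linarith
    field_simp [hpi.ne', hpκne] at h1
    have h2 : yκ * p i = yκ * (w i * pκ) := by rw [h1]
    have h3 := mul_left_cancel₀ hy h2
    field_simp [hpκne]
    linarith
  · intro h
    apply Finset.sum_eq_zero
    intro i hi
    rw [h i hi]
    have : p i / pκ * yκ / p i - yκ / pκ = 0 := by
      field_simp [(hp i).ne', hpκne]
      ring
    rw [this]
    ring
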